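/- As n → ∞, the average-case approximation ratio of mechanism P has limit superior at most ( ∑_{j=1}^m (E_{t∼D^j}[1/t])^{-1} ) / ( ∑_{j=1}^m t^j_min ): limsup_{n→∞} r_n(P) ≤ (∑_j (E_{t∼D^j}[1/t])^{-1}) / (∑_j t^j_min). -/

import Mathlib

open MeasureTheory ProbabilityTheory Finset Filter Real Topology

lemma iIndepFun_precomp' {ι ι' Ω β : Type*} [MeasurableSpace Ω] {μ : Measure Ω}
    [mβ : MeasurableSpace β] [Nonempty ι'] {f : ι → Ω → β} (g : ι' → ι)
    (hg : Function.Injective g)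
    (h : iIndepFun f μ) :
    iIndepFun (fun i' => f (g i')) μ := by
  classical
  rw [iIndepFun_iff_measure_inter_preimage_eq_mul] at h ⊢
  intro S sets hsets
  set sets' : ι → Set β := fun i =>
    if i ∈ S.image g then sets (Function.invFun g i) else Set.univ with hsets'def
  have hinv : ∀ k : ι', Function.invFun g (g k) = k := fun k =>
    Function.leftInverse_invFun hg k
  have hmem : ∀ k ∈ S, g k ∈ S.image g := fun k hk => Finset.mem_image.mpr ⟨k, hk, rfl⟩
  have hval : ∀ k ∈ S, sets' (g k) = sets k := by
    intro k hk
    rw [hsets'def]; simp only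
    rw [if_pos (hmem k hk), hinv k]
  have key := h (S.image g) (sets := sets') ?_
  · have h1 : (⋂ i ∈ S.image g, f i ⁻¹' sets' i) = ⋂ k ∈ S, (fun ω => f (g k) ω) ⁻¹' sets k := by
      ext ω
      simp only [Set.mem_iInter]
      constructor
      · intro H k hk
        have := H (g k) (hmem k hk)
        rwa [hval k hk] at this
      · intro H i hi
        obtain ⟨k, hk, rfl⟩ := Finset.mem_image.mp hi
        rw [hval k hk]; exact H k hk
    have h2 : ∏ i ∈ S.image g, μ (f i ⁻¹' sets' i)
        = ∏ k ∈ S, μ ((fun ω => f (g k) ω) ⁻¹' sets k) := by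
      rw [Finset.prod_image (fun a _ b _ hab => hg hab)]
      exact Finset.prod_congr rfl fun k hk => by rw [hval k hk]
    rw [← h1, ← h2]; exact key
  · intro i hi
    by_cases h' : i ∈ S.image g
    · obtain ⟨k, hk, rfl⟩ := Finset.mem_image.mp h'
      rw [hval k hk]; exact hsets _ hk
    · rw [hsets'def]; simp only
      rw [if_neg h']; exact MeasurableSet.univ

lemma exp_le_one_add_sq {x : ℝ} (hx : |x| ≤ 1) : rexp x ≤ 1 + x + x ^ 2 := by
  have h := Real.exp_bound hx (n := 2) (by norm_num)
  have h2 : ∑ m ∈ range 2, x ^ m / (m.factorial : ℝ) = 1 + x := by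
    simp [Finset.sum_range_succ]
  rw [h2] at h
  have h4 := (abs_le.mp h).2
  norm_num [Nat.factorial] at h4
  have h5 : |x| ^ 2 = x ^ 2 := sq_abs x
  nlinarith [sq_nonneg x]

lemma chernoff_bdd {Ω : Type*} [MeasureSpace Ω] [IsProbabilityMeasure (ℙ : Measure Ω)]
    (Z : ℕ → Ω → ℝ) (hZmeas : ∀ k, Measurable (Z k))
    (hindep : iIndepFun Z ℙ)
    (M : ℝ) (hbdd : ∀ k, ∀ᵐ ω, |Z k ω| ≤ M)
    (hmean : ∀ k, ∫ ω, Z k ω ∂ℙ = 0)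
    (s : ℝ) (hs : 0 < s) (hsM : s * M ≤ 1) (n : ℕ) (ε : ℝ) :
    (ℙ {ω | (n : ℝ) * ε ≤ ∑ k ∈ range n, Z k ω}).toReal
      ≤ rexp (-((n : ℝ) * (s * ε - s ^ 2 * M ^ 2))) := by
  have hZint : ∀ k, Integrable (Z k) ℙ := fun k =>
    Integrable.mono' (integrable_const M) (hZmeas k).aestronglyMeasurable
      (by filter_upwards [hbdd k] with ω h using h)
  have hZsqint : ∀ k, Integrable (fun ω => (Z k ω) ^ 2) ℙ := fun k =>
    Integrable.mono' (integrable_const (M ^ 2)) ((hZmeas k).pow_const 2).aestronglyMeasurable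
      (by filter_upwards [hbdd k] with ω h
          rw [norm_pow, Real.norm_eq_abs]
          exact pow_le_pow_left₀ (abs_nonneg _) h 2)
  have hexpint : ∀ k, Integrable (fun ω => rexp (s * Z k ω)) ℙ := fun k =>
    Integrable.mono' (integrable_const (rexp (s * M)))
      (((hZmeas k).const_mul s).exp).aestronglyMeasurable
      (by filter_upwards [hbdd k] with ω h
          rw [Real.norm_eq_abs, abs_of_pos (Real.exp_pos _)]
          exact Real.exp_le_exp.mpr (by
            calc s * Z k ω ≤ s * |Z k ω| := mul_le_mul_of_nonneg_left (le_abs_self _) hs.le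
              _ ≤ s * M := mul_le_mul_of_nonneg_left h hs.le))
  have hmgf : ∀ k, mgf (Z k) ℙ s ≤ rexp (s ^ 2 * M ^ 2) := by
    intro k
    have hsq : ∫ ω, (Z k ω) ^ 2 ∂ℙ ≤ M ^ 2 := by
      calc ∫ ω, (Z k ω) ^ 2 ∂ℙ ≤ ∫ _, M ^ 2 ∂ℙ := by
            refine integral_mono_ae (hZsqint k) (integrable_const _) ?_
            filter_upwards [hbdd k] with ω h
            rw [← sq_abs (Z k ω)]
            exact pow_le_pow_left₀ (abs_nonneg _) h 2
        _ = M ^ 2 := by simp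
    have hpt : ∀ᵐ ω, rexp (s * Z k ω) ≤ 1 + s * Z k ω + (s * Z k ω) ^ 2 := by
      filter_upwards [hbdd k] with ω h
      refine exp_le_one_add_sq ?_
      rw [abs_mul, abs_of_pos hs]
      calc s * |Z k ω| ≤ s * M := mul_le_mul_of_nonneg_left h hs.le
        _ ≤ 1 := hsM
    have hIntA : Integrable (fun ω => 1 + s * Z k ω) ℙ :=
      (integrable_const 1).add ((hZint k).const_mul s)
    have hIntB : Integrable (fun ω => (s * Z k ω) ^ 2) ℙ := by
      have := (hZsqint k).const_mul (s ^ 2)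
      simpa [mul_pow] using this
    have hint2 : Integrable (fun ω => 1 + s * Z k ω + (s * Z k ω) ^ 2) ℙ := hIntA.add hIntB
    calc mgf (Z k) ℙ s = ∫ ω, rexp (s * Z k ω) ∂ℙ := rfl
      _ ≤ ∫ ω, (1 + s * Z k ω + (s * Z k ω) ^ 2) ∂ℙ :=
          integral_mono_ae (hexpint k) hint2 hpt
      _ = (∫ ω, (1 + s * Z k ω) ∂ℙ) + ∫ ω, (s * Z k ω) ^ 2 ∂ℙ := integral_add hIntA hIntB
      _ = 1 + s * (∫ ω, Z k ω ∂ℙ) + s ^ 2 * ∫ ω, (Z k ω) ^ 2 ∂ℙ := by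
          rw [integral_add (integrable_const 1) ((hZint k).const_mul s)]
          simp only [mul_pow]
          rw [MeasureTheory.integral_const_mul, MeasureTheory.integral_const_mul]
          simp
      _ = 1 + s ^ 2 * ∫ ω, (Z k ω) ^ 2 ∂ℙ := by rw [hmean k]; ring
      _ ≤ 1 + s ^ 2 * M ^ 2 := by nlinarith [sq_nonneg s]
      _ ≤ rexp (s ^ 2 * M ^ 2) := by
          have := Real.add_one_le_exp (s ^ 2 * M ^ 2)
          linarith
  have hSint : Integrable (fun ω => rexp (s * (∑ k ∈ range n, Z k) ω)) ℙ := by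
    have heq : (fun ω => rexp (s * (∑ k ∈ range n, Z k) ω))
        = fun ω => rexp (s * ∑ k ∈ range n, Z k ω) := by
      funext ω; rw [Finset.sum_apply]
    rw [heq]
    refine Integrable.mono' (integrable_const (rexp (s * ((n : ℝ) * M))))
      ?_ ?_
    · exact (Measurable.exp ((Finset.measurable_sum (range n)
        (fun k _ => hZmeas k)).const_mul s)).aestronglyMeasurable
    · filter_upwards [ae_all_iff.2 hbdd] with ω h
      rw [Real.norm_eq_abs, abs_of_pos (Real.exp_pos _)]
      refine Real.exp_le_exp.mpr (mul_le_mul_of_nonneg_left ?_ hs.le)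
      calc ∑ k ∈ range n, Z k ω
          ≤ ∑ _k ∈ range n, M := Finset.sum_le_sum fun k _ => (abs_le.mp (h k)).2
        _ = (n : ℝ) * M := by simp [mul_comm]
  have hchern := measure_ge_le_exp_mul_mgf (μ := ℙ) (X := ∑ k ∈ range n, Z k)
    ((n : ℝ) * ε) hs.le hSint
  have hmgfsum : mgf (∑ k ∈ range n, Z k) ℙ s ≤ rexp ((n : ℝ) * (s ^ 2 * M ^ 2)) := by
    rw [hindep.mgf_sum hZmeas]
    calc ∏ k ∈ range n, mgf (Z k) ℙ s ≤ ∏ _k ∈ range n, rexp (s ^ 2 * M ^ 2) :=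
          Finset.prod_le_prod (fun k _ => mgf_nonneg) (fun k _ => hmgf k)
      _ = rexp ((n : ℝ) * (s ^ 2 * M ^ 2)) := by
          rw [Finset.prod_const, ← Real.exp_nat_mul, Finset.card_range]
  have hset : {ω | (n : ℝ) * ε ≤ ∑ k ∈ range n, Z k ω}
      = {ω | (n : ℝ) * ε ≤ (∑ k ∈ range n, Z k) ω} := by
    ext ω; simp [Finset.sum_apply]
  rw [hset]
  calc (ℙ {ω | (n : ℝ) * ε ≤ (∑ k ∈ range n, Z k) ω}).toReal
      ≤ rexp (-s * ((n : ℝ) * ε)) * mgf (∑ k ∈ range n, Z k) ℙ s := hchern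
    _ ≤ rexp (-s * ((n : ℝ) * ε)) * rexp ((n : ℝ) * (s ^ 2 * M ^ 2)) :=
        mul_le_mul_of_nonneg_left hmgfsum (Real.exp_pos _).le
    _ = rexp (-((n : ℝ) * (s * ε - s ^ 2 * M ^ 2))) := by
        rw [← Real.exp_add]; ring_nf

/-- Social cost of mechanism P on a cost vector `t`:
`SC_P(t) = ∑_k p_k^P t_k = n / (∑_k 1/t_k)` where `p_k^P = (1/t_k) / (∑_i 1/t_i)`. -/
noncomputable def SCP (n : ℕ) (t : Fin n → ℝ) : ℝ :=
  (n : ℝ) / (∑ k, 1 / t k)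

/-- With `m ≥ 1` tasks, costs `X i j ∼ D j` mutually independent, `D j` a
probability distribution on `[tmin j, ∞)` whose CDF is positive just above `tmin j`, the
average-case approximation ratio `r_n(P) = E[(∑_j SC_P(t^j)) / (∑_j min_i t_i^j)]` of
mechanism P satisfies `limsup_{n→∞} r_n(P) ≤ (∑_j (E_{t∼D^j}[1/t])⁻¹) / (∑_j tmin j)`. -/
theorem mechanismP_average_ratio_limsup_le
    {Ω : Type*} [MeasureSpace Ω] [IsProbabilityMeasure (ℙ : Measure Ω)]
    (m : ℕ) (hm : 1 ≤ m)
    (tmin : Fin m → ℝ) (htmin : ∀ j, 0 < tmin j)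
    (D : Fin m → Measure ℝ) (hprob : ∀ j, IsProbabilityMeasure (D j))
    (hsupp : ∀ j, D j (Set.Iio (tmin j)) = 0)
    (hcdf : ∀ j, ∀ δ : ℝ, 0 < δ → 0 < D j (Set.Iic (tmin j + δ)))
    (X : ℕ → Fin m → Ω → ℝ)
    (hmeas : ∀ i j, Measurable (X i j))
    (hindep : iIndepFun (fun p : ℕ × Fin m => X p.1 p.2) ℙ)
    (hdist : ∀ i j, Measure.map (X i j) ℙ = D j)
    (r : ℕ → ℝ)
    (hr : ∀ n, r n = ∫ ω, (∑ j, SCP n (fun i : Fin n => X i j ω)) /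
        (∑ j, ⨅ i : Fin n, X i j ω) ∂ℙ) :
    limsup r atTop ≤ (∑ j, (∫ t, 1 / t ∂(D j))⁻¹) / (∑ j, tmin j) := by
  classical
  haveI : Nonempty (Fin m) := ⟨⟨0, by omega⟩⟩
  set E : Fin m → ℝ := fun j => ∫ t, 1 / t ∂(D j) with hE
  have hEdef : ∀ j, (∫ t, 1 / t ∂(D j)) = E j := fun j => rfl
  have hg : Measurable (fun t : ℝ => 1 / t) := by
    simpa only [one_div] using (measurable_inv : Measurable (Inv.inv : ℝ → ℝ))
  -- a.e. facts about D j
  have haeD : ∀ j, ∀ᵐ t ∂(D j), tmin j ≤ t := by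
    intro j
    rw [ae_iff]
    simpa only [not_le] using (show D j {a | a < tmin j} = 0 from hsupp j)
  have hDint : ∀ j, Integrable (fun t : ℝ => 1 / t) (D j) := by
    intro j
    haveI := hprob j
    refine Integrable.mono' (integrable_const (1 / tmin j)) hg.aestronglyMeasurable ?_
    filter_upwards [haeD j] with t ht
    have h0 : 0 < t := lt_of_lt_of_le (htmin j) ht
    rw [Real.norm_eq_abs, abs_of_pos (by positivity)]
    exact one_div_le_one_div_of_le (htmin j) ht
  have haeDpos : ∀ j, ∀ᵐ t ∂(D j), 0 < 1 / t := by
    intro j; filter_upwards [haeD j] with t ht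
    have : 0 < t := lt_of_lt_of_le (htmin j) ht
    positivity
  have hEpos : ∀ j, 0 < E j := by
    intro j
    haveI := hprob j
    rcases lt_or_eq_of_le (integral_nonneg_of_ae (μ := D j) (f := fun t => 1 / t)
      (by filter_upwards [haeDpos j] with t ht using ht.le)) with h | h
    · exact h
    · exfalso
      have hz := (integral_eq_zero_iff_of_nonneg_ae
        (by filter_upwards [haeDpos j] with t ht using ht.le) (hDint j)).mp h.symm
      haveI : (ae (D j)).NeBot := ae_neBot.mpr (IsProbabilityMeasure.ne_zero _)
      obtain ⟨t, h1, h2⟩ := (hz.and (haeDpos j)).exists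
      simp only [Pi.zero_apply] at h1
      exact h2.ne' h1
  have hEle : ∀ j, E j ≤ 1 / tmin j := by
    intro j
    haveI := hprob j
    calc E j ≤ ∫ _, (1 / tmin j) ∂(D j) := by
          refine integral_mono_ae (hDint j) (integrable_const _) ?_
          filter_upwards [haeD j] with t ht
          exact one_div_le_one_div_of_le (htmin j) ht
      _ = 1 / tmin j := by simp
  -- change of variables
  have hmeanX : ∀ (i : ℕ) (j : Fin m), ∫ ω, 1 / X i j ω ∂ℙ = E j := by
    intro i j
    have h1 := integral_map (μ := ℙ) (φ := X i j) (hmeas i j).aemeasurable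
      (f := fun t : ℝ => 1 / t) (by rw [hdist i j]; exact hg.aestronglyMeasurable)
    rw [hdist i j] at h1
    rw [← hEdef j, ← h1]
  -- a.s. lower bound on X
  have haeX : ∀ᵐ ω, ∀ (i : ℕ) (j : Fin m), tmin j ≤ X i j ω := by
    rw [ae_all_iff]
    intro i
    rw [ae_all_iff]
    intro j
    rw [ae_iff]
    have : {ω | ¬ tmin j ≤ X i j ω} = X i j ⁻¹' Set.Iio (tmin j) := by
      ext ω; simp [not_le, Set.mem_preimage]
    rw [this, ← Measure.map_apply (hmeas i j) measurableSet_Iio, hdist i j]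
    exact hsupp j
  have htminsum : 0 < ∑ j, tmin j := Finset.sum_pos (fun j _ => htmin j) univ_nonempty
  have hXint : ∀ (k : ℕ) (j : Fin m), Integrable (fun ω => 1 / X k j ω) ℙ := by
    intro k j
    refine Integrable.mono' (integrable_const (1 / tmin j))
      (hg.comp (hmeas k j)).aestronglyMeasurable ?_
    filter_upwards [haeX] with ω hω
    have h0 : 0 < X k j ω := lt_of_lt_of_le (htmin j) (hω k j)
    rw [Real.norm_eq_abs, abs_of_pos (by positivity)]
    exact one_div_le_one_div_of_le (htmin j) (hω k j)
  -- the key bound for every admissible ε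
  have hkey : ∀ ε : ℝ, 0 < ε → (∀ j, ε < E j) →
      limsup r atTop ≤ (∑ j, (E j - ε)⁻¹) / (∑ j, tmin j) := by
    intro ε hε hεE
    set M : Fin m → ℝ := fun j => 1 / tmin j with hM
    have hMpos : ∀ j, 0 < M j := fun j => by
      have := htmin j; simp only [hM]; positivity
    set s : Fin m → ℝ := fun j => min (ε / (2 * M j ^ 2)) (1 / M j) with hs
    have hspos : ∀ j, 0 < s j := fun j =>
      lt_min (div_pos hε (mul_pos two_pos (pow_pos (hMpos j) 2)))
        (div_pos one_pos (hMpos j))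
    have hsM : ∀ j, s j * M j ≤ 1 := by
      intro j
      have h1 : s j ≤ 1 / M j := min_le_right _ _
      calc s j * M j ≤ (1 / M j) * M j := mul_le_mul_of_nonneg_right h1 (hMpos j).le
        _ = 1 := one_div_mul_cancel (hMpos j).ne'
    set c : Fin m → ℝ := fun j => s j * ε - s j ^ 2 * M j ^ 2 with hc
    have hcpos : ∀ j, 0 < c j := by
      intro j
      have h1 : s j ≤ ε / (2 * M j ^ 2) := min_le_left _ _
      have h2 : s j * M j ^ 2 ≤ ε / 2 := by
        have h3 := mul_le_mul_of_nonneg_right h1 (sq_nonneg (M j))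
        have hM2 : M j ^ 2 ≠ 0 := pow_ne_zero 2 (hMpos j).ne'
        have h4 : ε / (2 * M j ^ 2) * M j ^ 2 = ε / 2 := by
          rw [div_mul_eq_mul_div, mul_div_mul_right _ _ hM2]
        rw [h4] at h3; exact h3
      have h5 : s j ^ 2 * M j ^ 2 ≤ s j * (ε / 2) := by
        calc s j ^ 2 * M j ^ 2 = s j * (s j * M j ^ 2) := by ring
          _ ≤ s j * (ε / 2) := mul_le_mul_of_nonneg_left h2 (hspos j).le
      have h6 : 0 < s j * ε - s j * (ε / 2) := by
        have := mul_pos (hspos j) hε; nlinarith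
      simp only [hc]
      nlinarith
    -- the Z random variables and Chernoff bound
    have hZmeas : ∀ (j : Fin m) (k : ℕ), Measurable (fun ω => E j - 1 / X k j ω) :=
      fun j k => measurable_const.sub (hg.comp (hmeas k j))
    have hZindep : ∀ j : Fin m,
        iIndepFun (fun k (ω : Ω) => E j - 1 / X k j ω) ℙ := by
      intro j
      have hinj : Function.Injective (fun k : ℕ => (k, j)) := by
        intro a b hab; exact (Prod.mk.injEq _ _ _ _).mp hab |>.1
      have h1 := iIndepFun_precomp' (fun k : ℕ => (k, j)) hinj hindep
      have h2 := h1.comp (fun _ (x : ℝ) => E j - 1 / x)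
        (fun _ => measurable_const.sub hg)
      exact h2
    have hZbdd : ∀ (j : Fin m) (k : ℕ), ∀ᵐ ω, |E j - 1 / X k j ω| ≤ M j := by
      intro j k
      filter_upwards [haeX] with ω hω
      have h0 : 0 < X k j ω := lt_of_lt_of_le (htmin j) (hω k j)
      have h1 : 0 < 1 / X k j ω := by positivity
      have h2 : 1 / X k j ω ≤ M j := one_div_le_one_div_of_le (htmin j) (hω k j)
      have h3 : E j ≤ M j := hEle j
      rw [abs_le]
      constructor <;> [linarith [hEpos j]; linarith]
    have hZmean : ∀ (j : Fin m) (k : ℕ), ∫ ω, (E j - 1 / X k j ω) ∂ℙ = 0 := by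
      intro j k
      rw [integral_sub (integrable_const _) (hXint k j), hmeanX k j]
      simp
    have hcher : ∀ (n : ℕ) (j : Fin m),
        (ℙ {ω | (n : ℝ) * ε ≤ ∑ k ∈ range n, (E j - 1 / X k j ω)}).toReal
          ≤ rexp (-((n : ℝ) * c j)) := by
      intro n j
      have := chernoff_bdd (fun k ω => E j - 1 / X k j ω) (hZmeas j) (hZindep j)
        (M j) (hZbdd j) (hZmean j) (s j) (hspos j) (hsM j) n ε
      simpa only [hc] using this
    set K : ℝ := (∑ j, (E j - ε)⁻¹) / (∑ j, tmin j) with hK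
    have hKnum : 0 ≤ ∑ j, (E j - ε)⁻¹ :=
      Finset.sum_nonneg fun j _ => inv_nonneg.mpr (by linarith [hεE j])
    have hK0 : 0 ≤ K := div_nonneg hKnum htminsum.le
    -- bound r n for n ≥ 1
    have hrle : ∀ n : ℕ, 1 ≤ n → 0 ≤ r n ∧
        r n ≤ K + (n : ℝ) * ∑ j, rexp (-((n : ℝ) * c j)) := by
      intro n hn
      haveI : Nonempty (Fin n) := Fin.pos_iff_nonempty.mp hn
      have hnpos : (0 : ℝ) < (n : ℝ) := by exact_mod_cast hn
      set Bad : Fin m → Set Ω :=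
        fun j => {ω | (n : ℝ) * ε ≤ ∑ k ∈ range n, (E j - 1 / X k j ω)} with hBad
      set BadU : Set Ω := ⋃ j, Bad j with hBadU
      have hBadmeas : ∀ j, MeasurableSet (Bad j) := fun j =>
        measurableSet_le measurable_const
          (Finset.measurable_sum _ fun k _ => hZmeas j k)
      have hBadUmeas : MeasurableSet BadU := MeasurableSet.iUnion hBadmeas
      have hBadP : (ℙ BadU).toReal ≤ ∑ j, rexp (-((n : ℝ) * c j)) := by
        have h1 : ℙ BadU ≤ ∑ j, ℙ (Bad j) := measure_iUnion_fintype_le (ℙ : Measure Ω) Bad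
        calc (ℙ BadU).toReal ≤ (∑ j, ℙ (Bad j)).toReal := by
              refine ENNReal.toReal_mono ?_ h1
              exact (ENNReal.sum_lt_top.mpr fun j _ => measure_lt_top _ _).ne
          _ = ∑ j, (ℙ (Bad j)).toReal := ENNReal.toReal_sum fun j _ => measure_ne_top _ _
          _ ≤ ∑ j, rexp (-((n : ℝ) * c j)) := Finset.sum_le_sum fun j _ => hcher n j
      -- pointwise bound on the integrand
      have hFbound : ∀ᵐ ω, 0 ≤ (∑ j, SCP n (fun i : Fin n => X i j ω)) /
            (∑ j, ⨅ i : Fin n, X i j ω) ∧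
          (∑ j, SCP n (fun i : Fin n => X i j ω)) / (∑ j, ⨅ i : Fin n, X i j ω)
            ≤ K + BadU.indicator (fun _ => (n : ℝ)) ω := by
        filter_upwards [haeX] with ω hω
        have hXpos : ∀ (i : ℕ) (j : Fin m), 0 < X i j ω :=
          fun i j => lt_of_lt_of_le (htmin j) (hω i j)
        have hInf : ∀ j : Fin m, tmin j ≤ ⨅ i : Fin n, X i j ω :=
          fun j => le_ciInf fun i => hω i j
        have hBge : ∑ j, tmin j ≤ ∑ j, ⨅ i : Fin n, X i j ω :=
          Finset.sum_le_sum fun j _ => hInf j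
        have hBpos : 0 < ∑ j, ⨅ i : Fin n, X i j ω := lt_of_lt_of_le htminsum hBge
        have hQpos : ∀ j : Fin m, 0 < ∑ k : Fin n, 1 / X k j ω :=
          fun j => Finset.sum_pos (fun k _ => by
            have := hXpos k j; positivity) univ_nonempty
        have hSCPdef : ∀ j : Fin m, SCP n (fun i : Fin n => X i j ω)
            = (n : ℝ) / ∑ k : Fin n, 1 / X k j ω := fun j => rfl
        have hA0 : 0 ≤ ∑ j, SCP n (fun i : Fin n => X i j ω) :=
          Finset.sum_nonneg fun j _ => by
            rw [hSCPdef j]; exact div_nonneg hnpos.le (hQpos j).le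
        refine ⟨div_nonneg hA0 hBpos.le, ?_⟩
        by_cases hmem : ω ∈ BadU
        · rw [Set.indicator_of_mem hmem]
          have hSCPle : ∀ j : Fin m, SCP n (fun i : Fin n => X i j ω)
              ≤ (n : ℝ) * ⨅ i : Fin n, X i j ω := by
            intro j
            obtain ⟨k₀, -, hk₀⟩ := Finset.exists_min_image (univ : Finset (Fin n))
              (fun i => X i j ω) univ_nonempty
            have hinfeq : (⨅ i : Fin n, X i j ω) = X k₀ j ω :=
              le_antisymm (ciInf_le (Set.Finite.bddBelow (Set.finite_range _)) k₀)
                (le_ciInf fun i => hk₀ i (mem_univ i))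
            have h1 : 1 / X k₀ j ω ≤ ∑ k : Fin n, 1 / X k j ω :=
              Finset.single_le_sum (f := fun k : Fin n => 1 / X k j ω)
                (fun k _ => by have := hXpos k j; positivity) (mem_univ k₀)
            have h2 : 0 < 1 / X k₀ j ω := by have := hXpos k₀ j; positivity
            calc SCP n (fun i : Fin n => X i j ω)
                = (n : ℝ) / ∑ k : Fin n, 1 / X k j ω := rfl
              _ ≤ (n : ℝ) / (1 / X k₀ j ω) :=
                  div_le_div_of_nonneg_left hnpos.le h2 h1
              _ = (n : ℝ) * X k₀ j ω := by
                  rw [one_div, div_eq_mul_inv, inv_inv]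
              _ = (n : ℝ) * ⨅ i : Fin n, X i j ω := by rw [hinfeq]
          have hAB : (∑ j, SCP n (fun i : Fin n => X i j ω))
              ≤ (n : ℝ) * ∑ j, ⨅ i : Fin n, X i j ω := by
            calc (∑ j, SCP n (fun i : Fin n => X i j ω))
                ≤ ∑ j, (n : ℝ) * ⨅ i : Fin n, X i j ω :=
                  Finset.sum_le_sum fun j _ => hSCPle j
              _ = (n : ℝ) * ∑ j, ⨅ i : Fin n, X i j ω := by rw [Finset.mul_sum]
          have : (∑ j, SCP n (fun i : Fin n => X i j ω)) /
              (∑ j, ⨅ i : Fin n, X i j ω) ≤ (n : ℝ) :=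
            (div_le_iff₀ hBpos).mpr (by linarith)
          linarith
        · rw [Set.indicator_of_notMem hmem, add_zero]
          have hQge : ∀ j : Fin m, (n : ℝ) * (E j - ε) ≤ ∑ k : Fin n, 1 / X k j ω := by
            intro j
            have hnot : ¬ ((n : ℝ) * ε ≤ ∑ k ∈ range n, (E j - 1 / X k j ω)) := by
              intro hcon
              exact hmem (Set.mem_iUnion.mpr ⟨j, hcon⟩)
            push_neg at hnot
            have hsum : ∑ k ∈ range n, (E j - 1 / X k j ω)
                = (n : ℝ) * E j - ∑ k ∈ range n, 1 / X k j ω := by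
              rw [Finset.sum_sub_distrib, Finset.sum_const, Finset.card_range]
              simp [nsmul_eq_mul]
            rw [hsum] at hnot
            have hfin : (∑ k : Fin n, 1 / X k j ω) = ∑ k ∈ range n, 1 / X k j ω :=
              Fin.sum_univ_eq_sum_range (fun k => 1 / X k j ω) n
            rw [hfin]
            nlinarith
          have hSCPj : ∀ j : Fin m, SCP n (fun i : Fin n => X i j ω) ≤ (E j - ε)⁻¹ := by
            intro j
            have hEε : 0 < E j - ε := by linarith [hεE j]
            have hpos : 0 < (n : ℝ) * (E j - ε) := mul_pos hnpos hEε
            calc SCP n (fun i : Fin n => X i j ω)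
                = (n : ℝ) / ∑ k : Fin n, 1 / X k j ω := rfl
              _ ≤ (n : ℝ) / ((n : ℝ) * (E j - ε)) :=
                  div_le_div_of_nonneg_left hnpos.le hpos (hQge j)
              _ = (E j - ε)⁻¹ := by
                  rw [div_mul_eq_div_div, div_self hnpos.ne', one_div]
          rw [hK]
          exact div_le_div₀ hKnum (Finset.sum_le_sum fun j _ => hSCPj j) htminsum hBge
      -- measurability and integrability
      have hQmeas : ∀ j : Fin m, Measurable (fun ω => ∑ k : Fin n, 1 / X k j ω) :=
        fun j => Finset.measurable_sum _ (fun k _ => hg.comp (hmeas k j))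
      have hAmeas : Measurable (fun ω => ∑ j, SCP n fun i : Fin n => X i j ω) := by
        refine Finset.measurable_sum _ (fun j _ => ?_)
        have : (fun ω => SCP n fun i : Fin n => X i j ω)
            = fun ω => (n : ℝ) / ∑ k : Fin n, 1 / X k j ω := rfl
        rw [this]
        exact measurable_const.div (hQmeas j)
      have hBmeas : Measurable (fun ω => ∑ j, ⨅ i : Fin n, X i j ω) :=
        Finset.measurable_sum _ (fun j _ => Measurable.iInf (fun i => hmeas i j))
      have hFmeas : Measurable (fun ω => (∑ j, SCP n (fun i : Fin n => X i j ω)) /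
          (∑ j, ⨅ i : Fin n, X i j ω)) := hAmeas.div hBmeas
      have hFint : Integrable (fun ω => (∑ j, SCP n (fun i : Fin n => X i j ω)) /
          (∑ j, ⨅ i : Fin n, X i j ω)) ℙ := by
        refine Integrable.mono' (integrable_const (K + (n : ℝ)))
          hFmeas.aestronglyMeasurable ?_
        filter_upwards [hFbound] with ω h
        rw [Real.norm_eq_abs, abs_of_nonneg h.1]
        refine h.2.trans (add_le_add (le_refl K) ?_)
        by_cases hmem : ω ∈ BadU
        · rw [Set.indicator_of_mem hmem]
        · rw [Set.indicator_of_notMem hmem]; exact hnpos.le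
      have hGint : Integrable (fun ω => K + BadU.indicator (fun _ => (n : ℝ)) ω) ℙ :=
        (integrable_const K).add ((integrable_const ((n : ℝ))).indicator hBadUmeas)
      constructor
      · rw [hr n]
        exact integral_nonneg_of_ae (by filter_upwards [hFbound] with ω h using h.1)
      · rw [hr n]
        calc ∫ ω, (∑ j, SCP n (fun i : Fin n => X i j ω)) /
              (∑ j, ⨅ i : Fin n, X i j ω) ∂ℙ
            ≤ ∫ ω, (K + BadU.indicator (fun _ => (n : ℝ)) ω) ∂ℙ :=
              integral_mono_ae hFint hGint
                (by filter_upwards [hFbound] with ω h using h.2)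
          _ = K + (ℙ BadU).toReal * (n : ℝ) := by
              rw [integral_add (integrable_const K)
                ((integrable_const ((n : ℝ))).indicator hBadUmeas)]
              rw [integral_const]
              rw [integral_indicator_const _ hBadUmeas]
              simp [smul_eq_mul, measureReal_def]
          _ ≤ K + (n : ℝ) * ∑ j, rexp (-((n : ℝ) * c j)) := by
              have := mul_le_mul_of_nonneg_left hBadP hnpos.le
              nlinarith
    -- take limits
    have hg0 : Tendsto (fun n : ℕ => (n : ℝ) * ∑ j, rexp (-((n : ℝ) * c j)))
        atTop (𝓝 0) := by
      have hterm : ∀ j : Fin m, Tendsto (fun n : ℕ => (n : ℝ) * rexp (-((n : ℝ) * c j)))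
          atTop (𝓝 0) := by
        intro j
        have h1 : Tendsto (fun n : ℕ => c j * (n : ℝ)) atTop atTop :=
          (tendsto_natCast_atTop_atTop).const_mul_atTop (hcpos j)
        have h2 := (Real.tendsto_pow_mul_exp_neg_atTop_nhds_zero 1).comp h1
        have h3 := h2.const_mul (1 / c j)
        rw [mul_zero] at h3
        refine h3.congr ?_
        intro n
        simp only [Function.comp_apply, pow_one]
        have hcne : c j ≠ 0 := (hcpos j).ne'
        field_simp
      have h4 := tendsto_finset_sum (univ : Finset (Fin m)) (fun j _ => hterm j)
      simp only [Finset.sum_const_zero] at h4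
      refine h4.congr ?_
      intro n
      rw [Finset.mul_sum]
    have hble : Tendsto (fun n : ℕ => K + (n : ℝ) * ∑ j, rexp (-((n : ℝ) * c j)))
        atTop (𝓝 K) := by
      have := (tendsto_const_nhds (x := K) (f := (atTop : Filter ℕ))).add hg0
      simpa using this
    refine le_trans (limsup_le_limsup ?_ ?_ ?_) (le_of_eq hble.limsup_eq)
    · filter_upwards [eventually_ge_atTop 1] with n hn using (hrle n hn).2
    · refine IsBoundedUnder.isCoboundedUnder_le ⟨0, ?_⟩
      rw [eventually_map]
      filter_upwards [eventually_ge_atTop 1] with n hn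
      exact (hrle n hn).1
    · exact hble.isBoundedUnder_le
  -- conclude by letting ε → 0
  set ε₀ : ℝ := (univ : Finset (Fin m)).inf' univ_nonempty E with hε₀
  have hε₀pos : 0 < ε₀ := by
    rw [hε₀, Finset.lt_inf'_iff]
    exact fun j _ => hEpos j
  have hε₀le : ∀ j, ε₀ ≤ E j := fun j => Finset.inf'_le _ (mem_univ j)
  have hseq : ∀ k : ℕ, limsup r atTop
      ≤ (∑ j, (E j - ε₀ / ((k : ℝ) + 2))⁻¹) / (∑ j, tmin j) := by
    intro k
    refine hkey (ε₀ / ((k : ℝ) + 2)) (div_pos hε₀pos (by positivity)) (fun j => ?_)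
    have h1 : ε₀ / ((k : ℝ) + 2) < ε₀ := div_lt_self hε₀pos
      (by have := Nat.cast_nonneg (α := ℝ) k; linarith)
    exact lt_of_lt_of_le h1 (hε₀le j)
  have htendK : Tendsto (fun k : ℕ => (∑ j, (E j - ε₀ / ((k : ℝ) + 2))⁻¹) / (∑ j, tmin j))
      atTop (𝓝 ((∑ j, (E j)⁻¹) / (∑ j, tmin j))) := by
    refine Tendsto.div_const ?_ _
    have hsub : ∀ j : Fin m, Tendsto (fun k : ℕ => (E j - ε₀ / ((k : ℝ) + 2))⁻¹)
        atTop (𝓝 ((E j)⁻¹)) := by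
      intro j
      have h0 : Tendsto (fun k : ℕ => ε₀ / ((k : ℝ) + 2)) atTop (𝓝 0) := by
        refine Tendsto.div_atTop tendsto_const_nhds ?_
        exact tendsto_atTop_add_const_right _ 2 tendsto_natCast_atTop_atTop
      have h1 : Tendsto (fun k : ℕ => E j - ε₀ / ((k : ℝ) + 2)) atTop (𝓝 (E j)) := by
        have := (tendsto_const_nhds (x := E j) (f := (atTop : Filter ℕ))).sub h0
        simpa using this
      exact h1.inv₀ (hEpos j).ne'
    exact tendsto_finset_sum _ (fun j _ => hsub j)
  have hfinal := ge_of_tendsto htendK (Eventually.of_forall hseq)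
  calc limsup r atTop ≤ (∑ j, (E j)⁻¹) / (∑ j, tmin j) := hfinal
    _ = (∑ j, (∫ t, 1 / t ∂(D j))⁻¹) / (∑ j, tmin j) := by
        simp only [hEdef]
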